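/- Let μ and ν be probability measures on a measurable space E and let u : E → ℝ be a bounded measurable function. Then ∫ u dμ − log ∫ e^u dν ≤ H(μ|ν). -/

import Mathlib

open MeasureTheory

open Real in
/-- Gibbs' inequality: the relative entropy integral is nonnegative. -/
lemma gibbs_nonneg {E : Type*} [MeasurableSpace E] (μ ν : Measure E)
    [IsProbabilityMeasure μ] [IsProbabilityMeasure ν]
    (hμν : μ ≪ ν) (h_int : Integrable (llr μ ν) μ) :
    0 ≤ ∫ x, llr μ ν x ∂μ := by
  set f := μ.rnDeriv ν with hf
  have h0 : ∀ᵐ x ∂μ, 0 < f x := Measure.rnDeriv_pos hμν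
  have hlt : ∀ᵐ x ∂μ, f x < ⊤ := hμν.ae_le (Measure.rnDeriv_lt_top μ ν)
  set g : E → ℝ := fun x ↦ ((f x).toReal)⁻¹ with hg
  have hg_nonneg : ∀ x, 0 ≤ g x := fun x ↦ inv_nonneg.2 ENNReal.toReal_nonneg
  have hg_meas : AEMeasurable g μ :=
    ((Measure.measurable_rnDeriv μ ν).ennreal_toReal.inv).aemeasurable
  have h_eq : ∀ᵐ x ∂μ, ENNReal.ofReal (g x) = (f x)⁻¹ := by
    filter_upwards [h0, hlt] with x hx hx'
    show ENNReal.ofReal ((f x).toReal⁻¹) = (f x)⁻¹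
    rw [← ENNReal.toReal_inv, ENNReal.ofReal_toReal]
    simp [hx.ne']
  have h_lint : ∫⁻ x, ENNReal.ofReal (g x) ∂μ ≤ 1 := by
    rw [lintegral_congr_ae h_eq]
    have : ∫⁻ x, (f x)⁻¹ ∂μ = ∫⁻ x, f x * (f x)⁻¹ ∂ν :=
      (MeasureTheory.lintegral_rnDeriv_mul hμν
        ((Measure.measurable_rnDeriv μ ν).inv.aemeasurable)).symm
    rw [this]
    calc ∫⁻ x, f x * (f x)⁻¹ ∂ν ≤ ∫⁻ _, 1 ∂ν := lintegral_mono fun x ↦ ENNReal.mul_inv_le_one _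
    _ = 1 := by simp
  have hg_int : Integrable g μ := by
    refine ⟨hg_meas.aestronglyMeasurable, ?_⟩
    rw [hasFiniteIntegral_iff_norm]
    calc ∫⁻ x, ENNReal.ofReal ‖g x‖ ∂μ = ∫⁻ x, ENNReal.ofReal (g x) ∂μ := by
          congr 1; ext x; rw [Real.norm_eq_abs, abs_of_nonneg (hg_nonneg x)]
    _ ≤ 1 := h_lint
    _ < (⊤ : ENNReal) := by norm_num
  have hg_integral_le : ∫ x, g x ∂μ ≤ 1 := by
    rw [integral_eq_lintegral_of_nonneg_ae (ae_of_all _ hg_nonneg) hg_meas.aestronglyMeasurable]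
    calc (∫⁻ x, ENNReal.ofReal (g x) ∂μ).toReal ≤ (1 : ENNReal).toReal :=
          ENNReal.toReal_mono (by norm_num) h_lint
    _ = 1 := by simp
  have h_ptwise : ∀ᵐ x ∂μ, 1 - g x ≤ llr μ ν x := by
    filter_upwards [h0, hlt] with x hx hx'
    have ht : 0 < (f x).toReal := ENNReal.toReal_pos hx.ne' hx'.ne
    have := Real.log_le_sub_one_of_pos (inv_pos.2 ht)
    rw [Real.log_inv] at this
    rw [llr_def]
    simp only [hg]
    linarith
  have h1 : ∫ x, (1 - g x) ∂μ ≤ ∫ x, llr μ ν x ∂μ :=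
    integral_mono_ae ((integrable_const 1).sub hg_int) h_int h_ptwise
  rw [integral_sub (integrable_const 1) hg_int] at h1
  simp only [integral_const, measure_univ, probReal_univ, ENNReal.toReal_one, smul_eq_mul, one_mul] at h1
  linarith

open Classical in
/-- Relative entropy (Kullback–Leibler divergence): `H(μ|ν) = ∫ log (dμ/dν) dμ` when
`μ ≪ ν` (and the integral is well defined), and `+∞` otherwise. -/
noncomputable def relEntropy {E : Type*} [MeasurableSpace E] (μ ν : Measure E) : EReal :=
  if μ ≪ ν ∧ Integrable (llr μ ν) μ then ((∫ x, llr μ ν x ∂μ : ℝ) : EReal) else ⊤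

/-- **Donsker–Varadhan inequality.** For probability measures `μ, ν` and a bounded
measurable function `u`, one has `∫ u dμ − log ∫ e^u dν ≤ H(μ|ν)`. -/
theorem donsker_varadhan_le_relEntropy {E : Type*} [MeasurableSpace E]
    (μ ν : Measure E) [IsProbabilityMeasure μ] [IsProbabilityMeasure ν]
    (u : E → ℝ) (hu : Measurable u) (hbdd : ∃ C : ℝ, ∀ x, |u x| ≤ C) :
    ((∫ x, u x ∂μ - Real.log (∫ x, Real.exp (u x) ∂ν) : ℝ) : EReal) ≤ relEntropy μ ν := by
  by_cases h : μ ≪ ν ∧ Integrable (llr μ ν) μ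
  · rw [relEntropy, if_pos h, EReal.coe_le_coe_iff]
    obtain ⟨C, hC⟩ := hbdd
    have hu_int : Integrable u μ :=
      ⟨hu.aestronglyMeasurable, HasFiniteIntegral.of_bounded (C := C) (ae_of_all _ hC)⟩
    have hexp_int : Integrable (fun x ↦ Real.exp (u x)) ν := by
      refine ⟨(Real.measurable_exp.comp hu).aestronglyMeasurable,
        HasFiniteIntegral.of_bounded (C := Real.exp C) (ae_of_all _ fun x ↦ ?_)⟩
      rw [Real.norm_eq_abs, abs_of_pos (Real.exp_pos _)]
      exact Real.exp_le_exp.2 ((abs_le.1 (hC x)).2)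
    have hP : IsProbabilityMeasure (ν.tilted u) := isProbabilityMeasure_tilted hexp_int
    have hac : μ ≪ ν.tilted u := h.1.trans (absolutelyContinuous_tilted hexp_int)
    have h_int' : Integrable (llr μ (ν.tilted u)) μ :=
      integrable_llr_tilted_right h.1 hu_int h.2 hexp_int
    have hgibbs := gibbs_nonneg μ (ν.tilted u) hac h_int'
    rw [integral_llr_tilted_right h.1 hu_int hexp_int h.2] at hgibbs
    linarith
  · rw [relEntropy, if_neg h]
    exact le_top
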